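/- Let 𝒳 be a nonempty finite set, f : 𝒳 → ℝ, η ∈ [0,1], and T a positive integer. Let p⁽⁰⁾ be the uniform distribution on 𝒳 and for t = 1,…,T let α⁽ᵗ⁾ ∈ ℝ satisfy (i) min_{x∈𝒳} f(x) ≤ α⁽ᵗ⁾ and (ii) Σ_{x : f(x) > α⁽ᵗ⁾} p⁽ᵗ⁻¹⁾(x) ≥ 1/2, and define p⁽ᵗ⁾(x) = p⁽ᵗ⁻¹⁾(x)(1 − η·1{f(x) > α⁽ᵗ⁾}) / Σ_{y∈𝒳} p⁽ᵗ⁻¹⁾(y)(1 − η·1{f(y) > α⁽ᵗ⁾}). Then log Σ_{x : f(x) = min_{y∈𝒳} f(y)} p⁽ᵀ⁾(x) ≥ min( T·log(2/(2−η)) − log|𝒳|, 0 ). -/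

import Mathlib

open Finset
open scoped Classical

/-- cutting-plane bound for exact sublevel-set classification.
`p 0` is uniform on a nonempty finite set `𝒳`; at each round `t+1`, the
threshold `α (t+1)` is at least the minimum of `f` and the superlevel set
`{x : f x > α (t+1)}` has mass at least `1/2` under `p t`; the
multiplicative-weights update downweights the superlevel set by `1 - η`.
Then the final mass of the set of minimizers satisfies the stated bound. -/
theorem stmt0 {X : Type*} [Fintype X] [Nonempty X]
    (f : X → ℝ) (η : ℝ) (hη : η ∈ Set.Icc (0 : ℝ) 1)
    (T : ℕ) (hT : 0 < T)
    (p : ℕ → X → ℝ) (α : ℕ → ℝ)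
    (hp0 : ∀ x, p 0 x = 1 / (Fintype.card X : ℝ))
    (hα1 : ∀ t < T, Finset.univ.inf' Finset.univ_nonempty f ≤ α (t + 1))
    (hα2 : ∀ t < T,
      (1 : ℝ) / 2 ≤ ∑ x ∈ Finset.univ.filter (fun x => α (t + 1) < f x), p t x)
    (hrec : ∀ t < T, ∀ x, p (t + 1) x =
      p t x * (1 - η * (if α (t + 1) < f x then (1 : ℝ) else 0)) /
        ∑ y, p t y * (1 - η * (if α (t + 1) < f y then (1 : ℝ) else 0))) :
    Real.log (∑ x ∈ Finset.univ.filter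
        (fun x => f x = Finset.univ.inf' Finset.univ_nonempty f), p T x)
      ≥ min ((T : ℝ) * Real.log (2 / (2 - η)) - Real.log (Fintype.card X)) 0 := by
  classical
  set m := Finset.univ.inf' Finset.univ_nonempty f with hm
  obtain ⟨x₀, -, hx₀⟩ := Finset.exists_mem_eq_inf' (Finset.univ_nonempty) f
  have hcard0 : 0 < Fintype.card X := Fintype.card_pos
  have hcard : (0:ℝ) < (Fintype.card X : ℝ) := by exact_mod_cast hcard0
  have h2η : (0:ℝ) < 2 - η := by have := hη.2; linarith
  have hr : (0:ℝ) < 2/(2-η) := by positivity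
  have key : ∀ t ≤ T, (∀ x, 0 ≤ p t x) ∧ (∑ x, p t x = 1) ∧
      (2/(2-η))^t / (Fintype.card X : ℝ)
        ≤ ∑ x ∈ Finset.univ.filter (fun x => f x = m), p t x := by
    intro t
    induction t with
    | zero =>
      intro _
      refine ⟨fun x => by rw [hp0]; positivity, ?_, ?_⟩
      · simp only [hp0, Finset.sum_const, Finset.card_univ, nsmul_eq_mul]
        field_simp
      · have hmem : x₀ ∈ Finset.univ.filter (fun x => f x = m) := by
          simp [hx₀.symm]
          exact hm.symm
        have := Finset.single_le_sum
          (f := fun x => p 0 x) (fun i _ => by simp only [hp0]; positivity) hmem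
        simpa [hp0, pow_zero] using this
    | succ t ih =>
      intro hle
      have htT : t < T := hle
      obtain ⟨hnn, hsum, hS⟩ := ih (Nat.le_of_succ_le hle)
      set Z : ℝ := ∑ y, p t y * (1 - η * (if α (t + 1) < f y then (1 : ℝ) else 0))
        with hZ
      have hfac : ∀ y, 0 ≤ 1 - η * (if α (t + 1) < f y then (1 : ℝ) else 0) := by
        intro y; split <;> nlinarith [hη.1, hη.2]
      have hSpos : 0 < ∑ x ∈ Finset.univ.filter (fun x => f x = m), p t x :=
        lt_of_lt_of_le (by positivity) hS
      have hSeq : ∑ x ∈ Finset.univ.filter (fun x => f x = m), p t x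
          = ∑ x ∈ Finset.univ.filter (fun x => f x = m),
              p t x * (1 - η * (if α (t + 1) < f x then (1 : ℝ) else 0)) := by
        refine Finset.sum_congr rfl (fun x hx => ?_)
        have hfx : f x = m := by simpa using hx
        have : ¬ α (t+1) < f x := not_lt.2 (hfx ▸ hα1 t htT)
        simp [this]
      have hZpos : 0 < Z := by
        refine lt_of_lt_of_le hSpos ?_
        rw [hSeq, hZ]
        exact Finset.sum_le_sum_of_subset_of_nonneg (Finset.filter_subset _ _)
          (fun y _ _ => mul_nonneg (hnn y) (hfac y))
      have hZle : Z ≤ (2 - η)/2 := by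
        have hmass : (1:ℝ)/2 ≤ ∑ x ∈ Finset.univ.filter (fun x => α (t + 1) < f x), p t x :=
          hα2 t htT
        have hZeq : Z = (∑ y, p t y)
            - η * ∑ x ∈ Finset.univ.filter (fun x => α (t + 1) < f x), p t x := by
          rw [hZ, Finset.sum_filter, Finset.mul_sum, ← Finset.sum_sub_distrib]
          refine Finset.sum_congr rfl (fun x _ => ?_)
          split <;> ring
        rw [hsum] at hZeq
        rw [hZeq]
        nlinarith [hη.1]
      have hrec' := hrec t htT
      refine ⟨fun x => by rw [hrec' x]; exact div_nonneg (mul_nonneg (hnn x) (hfac x)) hZpos.le,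
        ?_, ?_⟩
      · have : ∑ x, p (t+1) x = Z / Z := by
          rw [Finset.sum_congr rfl (fun x _ => hrec' x), ← Finset.sum_div]
        rw [this, div_self hZpos.ne']
      · have hSnew : ∑ x ∈ Finset.univ.filter (fun x => f x = m), p (t+1) x
            = (∑ x ∈ Finset.univ.filter (fun x => f x = m), p t x) / Z := by
          rw [Finset.sum_congr rfl (fun x hx => hrec' x), ← Finset.sum_div, ← hSeq]
        rw [hSnew]
        calc (2/(2-η))^(t+1) / (Fintype.card X : ℝ)
            = (2/(2-η))^t / (Fintype.card X : ℝ) / ((2-η)/2) := by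
              rw [pow_succ]; field_simp
          _ ≤ (∑ x ∈ Finset.univ.filter (fun x => f x = m), p t x) / ((2-η)/2) := by
              gcongr
          _ ≤ (∑ x ∈ Finset.univ.filter (fun x => f x = m), p t x) / Z := by
              gcongr
  obtain ⟨-, -, hS⟩ := key T le_rfl
  have hSpos : 0 < (2/(2-η))^T / (Fintype.card X : ℝ) := by positivity
  have hlog := Real.log_le_log hSpos hS
  refine le_trans (min_le_left _ _) ?_
  rw [Real.log_div (by positivity) hcard.ne', Real.log_pow] at hlog
  exact le_trans (le_of_eq rfl) (by push_cast at hlog ⊢; linarith)
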